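/- Let z₀ z₁ : ℂ with ‖z₀‖^2 + ‖z₁‖^2 = 1, and define ψ : Bool → ℂ by ψ b = if b then z₁ else z₀. Define the 4-qubit state Ψ : Bool × Bool × Bool × Bool → ℂ by Ψ (b₀, b₁, b₂, b₃) = (if b₁ = b₀ then ψ b₀ else 0) * (if b₂ = b₃ then 1/Real.sqrt 2 else 0), i.e. the entangled state z₀|00⟩ + z₁|11⟩ on qubits 0,1 tensored with a Bell pair on qubits 2,3. Let Φ be obtained from Ψ by applying the CNOT gate with control qubit 1 and target qubit 2 (sending v to (b₀,b₁,b₂,b₃) ↦ v (b₀, b₁, xor b₁ b₂, b₃)) and then the Hadamard gate on qubit 1 (sending v to (b₀,b₁,b₂,b₃) ↦ (1/Real.sqrt 2) * (v (b₀, false, b₂, b₃) + (if b₁ then -1 else 1) * v (b₀, true, b₂, b₃))). Then for every u w : Bool: (a) the probability of measuring qubits 1 and 2 and obtaining outcomes u and w, namely ∑_{b₀ b₃ : Bool} ‖Φ (b₀, u, w, b₃)‖^2, equals 1/4; and (b) letting χ (b₀, b₃) = 2 * Φ (b₀, u, w, b₃) be the renormalized post-measurement state on qubits 0 and 3, applying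 to qubit 3 first the Z gate if u = true (multiplying by -1 when b₃ = true) and then the X gate if w = true (replacing b₃ by !b₃) yields exactly the state (b₀, b₃) ↦ (if u && w then -1 else 1) * (if b₃ = b₀ then ψ b₀ else 0). Hence, up to the global sign (−1)^{u∧w}, quantum teleportation transfers the entanglement originally between qubits 0 and 1 to qubits 0 and 3. -/

import Mathlib

theorem teleportation_preserves_entanglement
    (z₀ z₁ : ℂ) (hnorm : ‖z₀‖^2 + ‖z₁‖^2 = 1)
    (ψ : Bool → ℂ) (hψ : ψ = fun b => if b then z₁ else z₀)
    (Ψ : Bool × Bool × Bool × Bool → ℂ)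
    (hΨ : Ψ = fun p => (if p.2.1 = p.1 then ψ p.1 else 0) *
      (if p.2.2.1 = p.2.2.2 then (1 : ℂ)/Real.sqrt 2 else 0))
    (Ψ' : Bool × Bool × Bool × Bool → ℂ)
    (hΨ' : Ψ' = fun p => Ψ (p.1, p.2.1, xor p.2.1 p.2.2.1, p.2.2.2))
    (Φ : Bool × Bool × Bool × Bool → ℂ)
    (hΦ : Φ = fun p => ((1 : ℂ)/Real.sqrt 2) *
      (Ψ' (p.1, false, p.2.2.1, p.2.2.2) +
        (if p.2.1 then -1 else 1) * Ψ' (p.1, true, p.2.2.1, p.2.2.2))) :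
    ∀ u w : Bool,
      (∑ b₀ : Bool, ∑ b₃ : Bool, ‖Φ (b₀, u, w, b₃)‖^2 = 1/4) ∧
      (∀ χ : Bool × Bool → ℂ, χ = (fun p => 2 * Φ (p.1, u, w, p.2)) →
        (fun p : Bool × Bool =>
            (fun q : Bool × Bool => (if u && q.2 then (-1 : ℂ) else 1) * χ q)
              (p.1, xor p.2 w)) =
          fun p : Bool × Bool =>
            (if u && w then (-1 : ℂ) else 1) * (if p.2 = p.1 then ψ p.1 else 0)) := by
  have hs2 : (Real.sqrt 2 : ℂ) * (Real.sqrt 2 : ℂ) = 2 := by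
    norm_cast
    exact Real.mul_self_sqrt (by norm_num)
  have hs2ne : (Real.sqrt 2 : ℂ) ≠ 0 := by
    intro h
    rw [h, mul_zero] at hs2
    norm_num at hs2
  have hΦ' : ∀ b₀ u w b₃ : Bool, Φ (b₀, u, w, b₃) =
      if b₃ = xor b₀ w then (if u && b₀ then -1 else 1) * ψ b₀ / 2 else 0 := by
    intro b₀ u w b₃
    subst hΦ hΨ' hΨ
    cases b₀ <;> cases u <;> cases w <;> cases b₃ <;> simp <;> field_simp <;>
      (rw [sq, hs2]; ring)
  intro u w
  constructor
  · cases u <;> cases w <;>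
      simp [Fintype.sum_bool, hΦ', hψ, norm_div, norm_mul, div_pow] <;>
      norm_num <;> linarith [hnorm]
  · intro χ hχ
    subst hχ
    funext p
    obtain ⟨b₀, b₃⟩ := p
    simp only [hΦ']
    cases b₀ <;> cases u <;> cases w <;> cases b₃ <;> simp <;> ring
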